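/- Let μ be a Borel probability measure on a standard Borel space X, let κ = (k_1,...,k_n) be a nondecreasing sequence of nonzero integers, and let λ be a finite Borel measure on X^n such that (π_i)_*λ ≪ μ for each i ≤ n, where π_i : X^n → X is the i-th coordinate projection. Then the assignment sending f ∈ L^0(μ,T) to the multiplication operator U_f on L^2(λ,ℂ) given by U_f(h) = (∏_{i≤n} (f∘π_i)^{k_i})·h is a well-defined strongly continuous unitary representation of L^0(μ,T) on L^2(λ,ℂ). -/

import Mathlib

open MeasureTheory TopologicalSpace

noncomputable section

/-- The topology of convergence in measure on the space `L⁰(μ, G) = X →ₘ[μ] G` of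
`μ`-equivalence classes of measurable functions. -/
def l0Topology {X G : Type*} [MeasurableSpace X] (μ : Measure X) [MetricSpace G] :
    TopologicalSpace (X →ₘ[μ] G) :=
  TopologicalSpace.generateFrom
    { U | ∃ (f : X →ₘ[μ] G) (ε δ : ℝ), 0 < ε ∧ 0 < δ ∧
        U = { g | μ { x | ε ≤ dist (f x) (g x) } < ENNReal.ofReal δ } }

open Complex in
section
open scoped ENNReal NNReal

namespace St17

lemma circle_norm (z : Circle) : ‖(z : ℂ)‖ = 1 := by
  exact Circle.norm_coe z

lemma circle_coe_pow (z : Circle) (p : ℕ) : ((z ^ p : Circle) : ℂ) = (z : ℂ) ^ p := by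
  induction p with
  | zero => simp
  | succ p ih => rw [pow_succ, pow_succ, Circle.coe_mul, ih]

lemma circle_coe_zpow (z : Circle) (m : ℤ) : ((z ^ m : Circle) : ℂ) = (z : ℂ) ^ m := by
  cases m with
  | ofNat p => simpa using circle_coe_pow z p
  | negSucc p => simp [zpow_negSucc, Circle.coe_inv, circle_coe_pow]

lemma circle_norm_zpow (z : Circle) (m : ℤ) : ‖(z : ℂ) ^ m‖ = 1 := by
  rw [norm_zpow, circle_norm, one_zpow]

variable {X : Type*} [MeasurableSpace X] {μ : Measure X} {n : ℕ} {lam : Measure (Fin n → X)}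

/-- The multiplier function. -/
def Gfun (k : Fin n → ℤ) (f : X →ₘ[μ] Circle) (x : Fin n → X) : ℂ :=
  ∏ j, ((f (x j) : ℂ) ^ k j)

lemma Gfun_sm (k : Fin n → ℤ) (f : X →ₘ[μ] Circle) : StronglyMeasurable (Gfun k f) := by
  apply Finset.stronglyMeasurable_fun_prod
  intro j _
  have h1 : StronglyMeasurable fun x : Fin n → X => f (x j) :=
    f.stronglyMeasurable.comp_measurable (measurable_pi_apply j)
  have h2 : Continuous fun z : Circle => ((z ^ k j : Circle) : ℂ) :=
    continuous_subtype_val.comp (continuous_zpow (k j))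
  have h3 := h2.comp_stronglyMeasurable h1
  have : (fun x : Fin n → X => ((f (x j) ^ k j : Circle) : ℂ))
      = fun x : Fin n → X => ((f (x j) : ℂ) ^ k j) := by
    funext x; exact circle_coe_zpow _ _
  rwa [this] at h3

lemma Gfun_norm (k : Fin n → ℤ) (f : X →ₘ[μ] Circle) (x : Fin n → X) : ‖Gfun k f x‖ = 1 := by
  rw [Gfun, norm_prod]
  exact Finset.prod_eq_one fun j _ => circle_norm_zpow _ _

lemma ae_pi (hA1 : ∀ j : Fin n, lam.map (fun x => x j) ≪ μ) {p : X → Prop}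
    (hp : ∀ᵐ y ∂μ, p y) : ∀ᵐ x ∂lam, ∀ j, p (x j) := by
  rw [ae_all_iff]
  intro j
  exact Measure.QuasiMeasurePreserving.ae ⟨measurable_pi_apply j, hA1 j⟩ hp

lemma Gfun_mul (k : Fin n → ℤ) (hA1 : ∀ j : Fin n, lam.map (fun x => x j) ≪ μ)
    (f g : X →ₘ[μ] Circle) :
    Gfun k (f * g) =ᵐ[lam] fun x => Gfun k f x * Gfun k g x := by
  filter_upwards [ae_pi hA1 (f.coeFn_mul g)] with x hx
  simp only [Gfun, ← Finset.prod_mul_distrib]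
  refine Finset.prod_congr rfl fun j _ => ?_
  rw [hx j, Pi.mul_apply, Circle.coe_mul, mul_zpow]

lemma Gfun_one (k : Fin n → ℤ) (hA1 : ∀ j : Fin n, lam.map (fun x => x j) ≪ μ) :
    Gfun k (1 : X →ₘ[μ] Circle) =ᵐ[lam] 1 := by
  filter_upwards [ae_pi hA1 (AEEqFun.coeFn_one (β := Circle) (μ := μ))] with x hx
  simp only [Gfun, Pi.one_apply]
  refine Finset.prod_eq_one fun j _ => ?_
  rw [hx j]
  simp

lemma Gfun_conj (k : Fin n → ℤ) (hA1 : ∀ j : Fin n, lam.map (fun x => x j) ≪ μ)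
    (f : X →ₘ[μ] Circle) :
    (fun x => (starRingEnd ℂ) (Gfun k f x)) =ᵐ[lam] Gfun k f⁻¹ := by
  filter_upwards [ae_pi hA1 (f.coeFn_inv)] with x hx
  simp only [Gfun, map_prod]
  refine Finset.prod_congr rfl fun j _ => ?_
  rw [hx j, Pi.inv_apply, Circle.coe_inv_eq_conj, ← map_zpow₀]

lemma memℒp_mul (k : Fin n → ℤ) (f : X →ₘ[μ] Circle) (h : Lp ℂ 2 lam) :
    MemLp (fun x => Gfun k f x * h x) 2 lam :=
  MemLp.of_le (Lp.memLp h)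
    ((Gfun_sm k f).aestronglyMeasurable.mul (Lp.aestronglyMeasurable h))
    (Filter.Eventually.of_forall fun x => by rw [norm_mul, Gfun_norm, one_mul])

/-- The multiplication operator, as a bare function. -/
def U0 (k : Fin n → ℤ) (f : X →ₘ[μ] Circle) (h : Lp ℂ 2 lam) : Lp ℂ 2 lam :=
  (memℒp_mul k f h).toLp _

lemma U0_coe (k : Fin n → ℤ) (f : X →ₘ[μ] Circle) (h : Lp ℂ 2 lam) :
    ⇑(U0 k f h) =ᵐ[lam] fun x => Gfun k f x * h x :=
  MemLp.coeFn_toLp _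

lemma U0_norm (k : Fin n → ℤ) (f : X →ₘ[μ] Circle) (h : Lp ℂ 2 lam) :
    ‖U0 k f h‖ = ‖h‖ := by
  rw [U0, Lp.norm_toLp, Lp.norm_def]
  congr 1
  exact eLpNorm_congr_norm_ae
    (Filter.Eventually.of_forall fun x => by rw [norm_mul, Gfun_norm, one_mul])

/-- The multiplication operator, as a linear map. -/
def U0lin (k : Fin n → ℤ) (f : X →ₘ[μ] Circle) : Lp ℂ 2 lam →ₗ[ℂ] Lp ℂ 2 lam where
  toFun := U0 k f
  map_add' h1 h2 := by
    apply Lp.ext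
    filter_upwards [U0_coe k f (h1 + h2), U0_coe k f h1, U0_coe k f h2,
      Lp.coeFn_add h1 h2, Lp.coeFn_add (U0 k f h1) (U0 k f h2)] with x e1 e2 e3 e4 e5
    rw [e1, e5, Pi.add_apply, e2, e3, e4, Pi.add_apply, mul_add]
  map_smul' c h := by
    apply Lp.ext
    filter_upwards [U0_coe k f (c • h), U0_coe k f h,
      Lp.coeFn_smul c h, Lp.coeFn_smul c (U0 k f h)] with x e1 e2 e3 e4
    rw [e1, RingHom.id_apply, e4, Pi.smul_apply, e2, e3, Pi.smul_apply]
    simp [mul_comm, mul_left_comm]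

/-- The multiplication operator, as a continuous linear map. -/
def U (k : Fin n → ℤ) (f : X →ₘ[μ] Circle) : Lp ℂ 2 lam →L[ℂ] Lp ℂ 2 lam :=
  LinearMap.mkContinuous (U0lin k f) 1 fun h => by
    exact (by simpa using (U0_norm k f h).le : ‖U0 k f h‖ ≤ 1 * ‖h‖)

lemma U_apply (k : Fin n → ℤ) (f : X →ₘ[μ] Circle) (h : Lp ℂ 2 lam) :
    U k f h = U0 k f h := rfl


variable (k : Fin n → ℤ)

lemma U_mul (hA1 : ∀ j : Fin n, lam.map (fun x => x j) ≪ μ) (f g : X →ₘ[μ] Circle) : U k (f * g) = (U k f * U k g : Lp ℂ 2 lam →L[ℂ] Lp ℂ 2 lam) := by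
  ext h
  have hr : (U k f * U k g : Lp ℂ 2 lam →L[ℂ] Lp ℂ 2 lam) h = U0 k f (U0 k g h) := rfl
  rw [hr]
  filter_upwards [U0_coe k (f * g) h, U0_coe k g h, U0_coe k f (U0 k g h),
    Gfun_mul k hA1 f g] with x e1 e2 e3 e4
  rw [U_apply, e1, e3, e2, e4]
  ring

lemma U_one (hA1 : ∀ j : Fin n, lam.map (fun x => x j) ≪ μ) : U k (1 : X →ₘ[μ] Circle) = (1 : Lp ℂ 2 lam →L[ℂ] Lp ℂ 2 lam) := by
  ext h
  have hr : (1 : Lp ℂ 2 lam →L[ℂ] Lp ℂ 2 lam) h = h := rfl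
  rw [hr]
  filter_upwards [U0_coe k 1 h, Gfun_one k hA1] with x e1 e2
  rw [U_apply, e1, e2]
  simp

lemma U_adj (hA1 : ∀ j : Fin n, lam.map (fun x => x j) ≪ μ) (f : X →ₘ[μ] Circle) :
    U k f⁻¹ = ContinuousLinearMap.adjoint (U k f : Lp ℂ 2 lam →L[ℂ] Lp ℂ 2 lam) := by
  rw [ContinuousLinearMap.eq_adjoint_iff]
  intro x y
  rw [L2.inner_def, L2.inner_def]
  apply integral_congr_ae
  filter_upwards [U0_coe k f⁻¹ x, U0_coe k f y, Gfun_conj k hA1 f] with z e1 e2 e3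
  have e1' : (U k f⁻¹ x : Lp ℂ 2 lam) z = Gfun k f⁻¹ z * x z := e1
  have e2' : (U k f y : Lp ℂ 2 lam) z = Gfun k f z * y z := e2
  rw [RCLike.inner_apply, RCLike.inner_apply, e1', e2', ← e3, map_mul, Complex.conj_conj]
  ring

lemma U_mem (hA1 : ∀ j : Fin n, lam.map (fun x => x j) ≪ μ) (f : X →ₘ[μ] Circle) :
    U k f ∈ unitary (Lp ℂ 2 lam →L[ℂ] Lp ℂ 2 lam) := by
  rw [Unitary.mem_iff]
  constructor
  · rw [ContinuousLinearMap.star_eq_adjoint, ← U_adj k hA1 f, ← U_mul k hA1,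
      inv_mul_cancel, U_one k hA1]
  · rw [ContinuousLinearMap.star_eq_adjoint, ← U_adj k hA1 f, ← U_mul k hA1,
      mul_inv_cancel, U_one k hA1]

/-- The representation, as a monoid hom into the unitary group. -/
def rho (hA1 : ∀ j : Fin n, lam.map (fun x => x j) ≪ μ) : (X →ₘ[μ] Circle) →* unitary (Lp ℂ 2 lam →L[ℂ] Lp ℂ 2 lam) where
  toFun f := ⟨U k f, U_mem k hA1 f⟩
  map_one' := Subtype.ext (U_one k hA1)
  map_mul' f g := Subtype.ext (U_mul k hA1 f g)


lemma circle_dist (z w : Circle) : dist z w = ‖(z : ℂ) - (w : ℂ)‖ := by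
  exact dist_eq_norm (z:ℂ) w

lemma inv_eq_conj {z : ℂ} (hz : ‖z‖ = 1) : z⁻¹ = (starRingEnd ℂ) z := by
  have h : Complex.normSq z = 1 := by
    rw [Complex.normSq_eq_norm_sq, hz]; norm_num
  rw [Complex.inv_def, h]; simp

lemma npow_diff (a b : ℂ) (ha : ‖a‖ = 1) (hb : ‖b‖ = 1) (p : ℕ) :
    ‖a ^ p - b ^ p‖ ≤ p * ‖a - b‖ := by
  induction p with
  | zero => simp
  | succ p ih =>
    have h1 : a ^ (p + 1) - b ^ (p + 1) = a * (a ^ p - b ^ p) + (a - b) * b ^ p := by ring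
    calc ‖a ^ (p + 1) - b ^ (p + 1)‖
        ≤ ‖a * (a ^ p - b ^ p)‖ + ‖(a - b) * b ^ p‖ := by rw [h1]; exact norm_add_le _ _
      _ = ‖a ^ p - b ^ p‖ + ‖a - b‖ := by
          rw [norm_mul, norm_mul, ha, norm_pow, hb, one_mul, one_pow, mul_one]
      _ ≤ p * ‖a - b‖ + ‖a - b‖ := by
          have := norm_nonneg (a - b); gcongr
      _ = (p + 1 : ℕ) * ‖a - b‖ := by push_cast; ring

lemma zpow_diff (a b : Circle) (m : ℤ) :
    ‖(a : ℂ) ^ m - (b : ℂ) ^ m‖ ≤ |(m : ℝ)| * ‖(a : ℂ) - (b : ℂ)‖ := by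
  cases m with
  | ofNat p => simpa using npow_diff (a : ℂ) (b : ℂ) (circle_norm a) (circle_norm b) p
  | negSucc p =>
    have hpa : ‖(a : ℂ) ^ (p + 1)‖ = 1 := by rw [norm_pow, circle_norm, one_pow]
    have hpb : ‖(b : ℂ) ^ (p + 1)‖ = 1 := by rw [norm_pow, circle_norm, one_pow]
    have h1 : (a : ℂ) ^ (Int.negSucc p) = (starRingEnd ℂ) ((a : ℂ) ^ (p + 1)) := by
      rw [zpow_negSucc, inv_eq_conj hpa]
    have h2 : (b : ℂ) ^ (Int.negSucc p) = (starRingEnd ℂ) ((b : ℂ) ^ (p + 1)) := by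
      rw [zpow_negSucc, inv_eq_conj hpb]
    rw [h1, h2, ← map_sub, RCLike.norm_conj]
    have := npow_diff (a : ℂ) (b : ℂ) (circle_norm a) (circle_norm b) (p + 1)
    have habs : |(Int.negSucc p : ℝ)| = (p + 1 : ℕ) := by
      rw [Int.cast_negSucc, abs_neg]
      push_cast
      exact abs_of_nonneg (by positivity)
    rw [habs]
    simpa using this

lemma prod_diff {ι : Type*} (s : Finset ι) (u v : ι → ℂ) (hu : ∀ i, ‖u i‖ = 1)
    (hv : ∀ i, ‖v i‖ = 1) :
    ‖(∏ i ∈ s, u i) - ∏ i ∈ s, v i‖ ≤ ∑ i ∈ s, ‖u i - v i‖ := by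
  induction s using Finset.cons_induction with
  | empty => simp
  | cons a s ha ih =>
    rw [Finset.prod_cons, Finset.prod_cons, Finset.sum_cons]
    have h1 : u a * ∏ i ∈ s, u i - v a * ∏ i ∈ s, v i
        = (u a - v a) * ∏ i ∈ s, u i + v a * ((∏ i ∈ s, u i) - ∏ i ∈ s, v i) := by ring
    have h2 : ‖∏ i ∈ s, u i‖ = 1 := by
      rw [norm_prod]; exact Finset.prod_eq_one fun i _ => hu i
    calc ‖u a * ∏ i ∈ s, u i - v a * ∏ i ∈ s, v i‖
        ≤ ‖(u a - v a) * ∏ i ∈ s, u i‖ + ‖v a * ((∏ i ∈ s, u i) - ∏ i ∈ s, v i)‖ := by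
          rw [h1]; exact norm_add_le _ _
      _ = ‖u a - v a‖ + ‖(∏ i ∈ s, u i) - ∏ i ∈ s, v i‖ := by
          rw [norm_mul, norm_mul, h2, hv a, mul_one, one_mul]
      _ ≤ ‖u a - v a‖ + ∑ i ∈ s, ‖u i - v i‖ := by gcongr

lemma eps_del {α : Type*} [MeasurableSpace α] (ν μ' : Measure α) [IsFiniteMeasure ν]
    [IsFiniteMeasure μ'] (hac : ν ≪ μ') {ε : ℝ≥0∞} (hε : ε ≠ 0) :
    ∃ δ : ℝ≥0∞, 0 < δ ∧ ∀ s : Set α, μ' s < δ → ν s < ε := by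
  obtain ⟨δ, hδ, H⟩ := exists_pos_setLIntegral_lt_of_measure_lt (μ := μ')
    (f := ν.rnDeriv μ') (Measure.lintegral_rnDeriv_lt_top ν μ').ne hε
  refine ⟨δ, hδ, fun s hs => ?_⟩
  calc ν s ≤ ν (toMeasurable μ' s) := measure_mono (subset_toMeasurable μ' s)
    _ = ∫⁻ x in toMeasurable μ' s, ν.rnDeriv μ' x ∂μ' := by
        conv_lhs => rw [← Measure.withDensity_rnDeriv_eq ν μ' hac]
        rw [withDensity_apply _ (measurableSet_toMeasurable μ' s)]
    _ < ε := H _ (by rwa [measure_toMeasurable])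


lemma U_cont [IsProbabilityMeasure μ] [IsFiniteMeasure lam]
    (hA1 : ∀ j : Fin n, lam.map (fun x => x j) ≪ μ) (h : Lp ℂ 2 lam) :
    @Continuous _ _ (l0Topology μ) _ (fun f : X →ₘ[μ] Circle => U k f h) := by
  letI 𝒯 : TopologicalSpace (X →ₘ[μ] Circle) := l0Topology μ
  refine continuous_iff_continuousAt.2 fun f => ?_
  refine Metric.tendsto_nhds.2 fun ε hε => ?_
  -- setup
  set W : (Fin n → X) → ℝ≥0∞ := fun x => (‖h x‖₊ : ℝ≥0∞) ^ (2 : ℝ) with hWdef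
  have hWm : Measurable W :=
    ((Lp.stronglyMeasurable h).measurable.nnnorm.coe_nnreal_ennreal).pow_const _
  have hB : ∫⁻ x, W x ∂lam < ⊤ := by
    have := lintegral_rpow_enorm_lt_top_of_eLpNorm_lt_top (f := (h : (Fin n → X) → ℂ))
      (p := 2) two_ne_zero ENNReal.ofNat_ne_top (Lp.eLpNorm_lt_top h)
    simpa [hWdef, ENNReal.toReal_ofNat, enorm_eq_nnnorm] using this
  set Br : ℝ := (∫⁻ x, W x ∂lam).toReal with hBr
  set C : ℝ := ∑ j : Fin n, |(k j : ℝ)| with hC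
  have hC0 : 0 ≤ C := Finset.sum_nonneg fun j _ => abs_nonneg _
  -- choose ε'
  have hcont : Filter.Tendsto (fun t : ℝ => (C * t) ^ 2 * Br) (nhds 0) (nhds 0) := by
    have hc : Continuous fun t : ℝ => (C * t) ^ 2 * Br := by continuity
    simpa using hc.tendsto 0
  have hev : ∀ᶠ t : ℝ in nhds 0, (C * t) ^ 2 * Br < ε ^ 2 / 2 :=
    hcont.eventually_lt_const (by positivity)
  rw [Metric.eventually_nhds_iff] at hev
  obtain ⟨δ₁, hδ₁, H1⟩ := hev
  set ε' : ℝ := δ₁ / 2 with hε'def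
  have hε'pos : 0 < ε' := by positivity
  have hkey : (C * ε') ^ 2 * Br < ε ^ 2 / 2 := by
    refine H1 ?_
    rw [Real.dist_eq, sub_zero, abs_of_pos hε'pos]
    rw [hε'def]; linarith
  -- target
  set T : ℝ≥0∞ := ENNReal.ofReal ε ^ (2 : ℝ) with hT
  have hTpos : 0 < T := ENNReal.rpow_pos (ENNReal.ofReal_pos.2 hε) ENNReal.ofReal_ne_top
  have hTne : T ≠ ⊤ := by
    rw [hT]
    exact (ENNReal.rpow_lt_top_of_nonneg (by norm_num) ENNReal.ofReal_ne_top).ne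
  -- the measures
  set mW := lam.withDensity W with hmW
  haveI : IsFiniteMeasure mW := isFiniteMeasure_withDensity hB.ne
  set ν : Measure X := ∑ j : Fin n, mW.map (fun x => x j) with hν
  haveI : IsFiniteMeasure ν := by
    constructor
    rw [hν, Measure.finset_sum_apply]
    exact ENNReal.sum_lt_top.2 fun j _ => measure_lt_top _ _
  have hνac : ν ≪ μ := by
    intro s hs
    rw [hν, Measure.finset_sum_apply]
    exact Finset.sum_eq_zero fun j _ =>
      ((withDensity_absolutelyContinuous lam W).map (measurable_pi_apply j)).trans (hA1 j) hs
  obtain ⟨δ₀, hδ₀, Hδ⟩ := eps_del ν μ hνac (ε := T / 2 / 4) (by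
    simp only [ne_eq, ENNReal.div_eq_zero_iff, not_or]
    refine ⟨⟨hTpos.ne', by norm_num⟩, by norm_num⟩)
  obtain ⟨δr, hδr, hδle⟩ : ∃ d : ℝ, 0 < d ∧ ENNReal.ofReal d ≤ δ₀ := by
    rcases eq_or_ne δ₀ ⊤ with rfl | hne
    · exact ⟨1, one_pos, le_top⟩
    · exact ⟨δ₀.toReal, ENNReal.toReal_pos hδ₀.ne' hne, by rw [ENNReal.ofReal_toReal hne]⟩
  -- the neighborhood
  set V : Set (X →ₘ[μ] Circle) :=
    {g | μ {x | ε' ≤ dist (f x) (g x)} < ENNReal.ofReal δr} with hV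
  have hVopen : IsOpen V :=
    TopologicalSpace.isOpen_generateFrom_of_mem ⟨f, ε', δr, hε'pos, hδr, rfl⟩
  have hfV : f ∈ V := by
    have hempty : {x : X | ε' ≤ dist (f x) (f x)} = ∅ := by
      ext x; simp [dist_self, not_le, hε'pos]
    simp only [hV, Set.mem_setOf_eq, hempty, measure_empty]
    exact ENNReal.ofReal_pos.2 hδr
  refine Filter.mem_of_superset (hVopen.mem_nhds hfV) ?_
  intro g hg
  simp only [Set.mem_setOf_eq] at hg ⊢
  -- main estimate
  set S : Set X := {y | ε' ≤ dist (f y) (g y)} with hS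
  have hgS : μ S < δ₀ := lt_of_lt_of_le hg hδle
  have hSm : MeasurableSet S :=
    measurableSet_le measurable_const (f.stronglyMeasurable.dist g.stronglyMeasurable).measurable
  set A : Set (Fin n → X) := ⋃ j : Fin n, (fun x : Fin n → X => x j) ⁻¹' S with hA
  have hAm : MeasurableSet A := MeasurableSet.iUnion fun j => measurable_pi_apply j hSm
  have hconv : ∀ (x : Fin n → X) (r : ℝ), 0 ≤ r → ‖Gfun k g x - Gfun k f x‖ ≤ r →
      (‖Gfun k g x - Gfun k f x‖₊ : ℝ≥0∞) ^ (2 : ℝ) ≤ ENNReal.ofReal (r ^ 2) := by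
    intro x r hr hle
    rw [← enorm_eq_nnnorm, ← ofReal_norm_eq_enorm]
    calc ENNReal.ofReal ‖Gfun k g x - Gfun k f x‖ ^ (2:ℝ)
        ≤ ENNReal.ofReal r ^ (2:ℝ) :=
          ENNReal.rpow_le_rpow (ENNReal.ofReal_le_ofReal hle) (by norm_num)
      _ = ENNReal.ofReal (r ^ (2:ℝ)) := ENNReal.ofReal_rpow_of_nonneg hr (by norm_num)
      _ = ENNReal.ofReal (r ^ 2) := by
          congr 1
          rw [← Real.rpow_natCast r 2]
          norm_num
  have hpt : ∀ x : Fin n → X,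
      (‖(Gfun k g x - Gfun k f x) * h x‖₊ : ℝ≥0∞) ^ (2:ℝ)
        ≤ A.indicator (fun x => 4 * W x) x + ENNReal.ofReal ((C * ε') ^ 2) * W x := by
    intro x
    have hsplit : (‖(Gfun k g x - Gfun k f x) * h x‖₊ : ℝ≥0∞) ^ (2:ℝ)
        = (‖Gfun k g x - Gfun k f x‖₊ : ℝ≥0∞) ^ (2:ℝ) * W x := by
      rw [nnnorm_mul, ENNReal.coe_mul, ENNReal.mul_rpow_of_nonneg _ _ (by norm_num : (0:ℝ) ≤ 2)]
    rw [hsplit]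
    by_cases hx : x ∈ A
    · rw [Set.indicator_of_mem hx]
      have h2 : ‖Gfun k g x - Gfun k f x‖ ≤ 2 := by
        have h3 := norm_sub_le (Gfun k g x) (Gfun k f x)
        rw [Gfun_norm, Gfun_norm] at h3
        linarith
      calc (‖Gfun k g x - Gfun k f x‖₊ : ℝ≥0∞) ^ (2:ℝ) * W x
          ≤ ENNReal.ofReal (2 ^ 2) * W x := mul_le_mul_left (hconv x 2 (by norm_num) h2) _
        _ = 4 * W x := by norm_num
        _ ≤ 4 * W x + ENNReal.ofReal ((C * ε') ^ 2) * W x := le_self_add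
    · rw [Set.indicator_of_notMem hx, zero_add]
      have hd : ∀ j, dist (f (x j)) (g (x j)) < ε' := by
        intro j
        by_contra hcon
        exact hx (Set.mem_iUnion.2 ⟨j, by simpa [hS] using not_lt.1 hcon⟩)
      have hb : ‖Gfun k g x - Gfun k f x‖ ≤ C * ε' := by
        have h1 := prod_diff Finset.univ (fun j => ((g (x j) : ℂ)) ^ k j)
          (fun j => ((f (x j) : ℂ)) ^ k j) (fun j => circle_norm_zpow _ _)
          (fun j => circle_norm_zpow _ _)
        calc ‖Gfun k g x - Gfun k f x‖
            ≤ ∑ j, ‖((g (x j) : ℂ)) ^ k j - ((f (x j) : ℂ)) ^ k j‖ := h1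
          _ ≤ ∑ j, |(k j : ℝ)| * ε' := by
              refine Finset.sum_le_sum fun j _ => ?_
              calc ‖((g (x j) : ℂ)) ^ k j - ((f (x j) : ℂ)) ^ k j‖
                  ≤ |((k j : ℤ) : ℝ)| * ‖((g (x j) : ℂ)) - ((f (x j) : ℂ))‖ :=
                    zpow_diff _ _ _
                _ ≤ |(k j : ℝ)| * ε' := by
                    have hdist : ‖((g (x j) : ℂ)) - ((f (x j) : ℂ))‖ = dist (f (x j)) (g (x j)) := by
                      rw [dist_comm, circle_dist]
                    rw [hdist]
                    exact mul_le_mul_of_nonneg_left (le_of_lt (hd j)) (abs_nonneg _)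
          _ = C * ε' := by rw [hC, Finset.sum_mul]
      exact mul_le_mul_left (hconv x _ (by positivity) hb) _
  have hint : ∫⁻ x, (‖(Gfun k g x - Gfun k f x) * h x‖₊ : ℝ≥0∞) ^ (2:ℝ) ∂lam < T := by
    have step1 : ∫⁻ x, (‖(Gfun k g x - Gfun k f x) * h x‖₊ : ℝ≥0∞) ^ (2:ℝ) ∂lam
        ≤ 4 * (∫⁻ x in A, W x ∂lam) + ENNReal.ofReal ((C * ε') ^ 2) * ∫⁻ x, W x ∂lam := by
      calc ∫⁻ x, (‖(Gfun k g x - Gfun k f x) * h x‖₊ : ℝ≥0∞) ^ (2:ℝ) ∂lam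
          ≤ ∫⁻ x, (A.indicator (fun x => 4 * W x) x
              + ENNReal.ofReal ((C * ε') ^ 2) * W x) ∂lam := lintegral_mono hpt
        _ = 4 * (∫⁻ x in A, W x ∂lam) + ENNReal.ofReal ((C * ε') ^ 2) * ∫⁻ x, W x ∂lam := by
            rw [lintegral_add_left ((hWm.const_mul 4).indicator hAm),
              lintegral_indicator hAm, lintegral_const_mul _ hWm, lintegral_const_mul _ hWm]
    have hA_bound : 4 * (∫⁻ x in A, W x ∂lam) < T / 2 := by
      have e1 : ∫⁻ x in A, W x ∂lam = mW A := by
        rw [hmW, withDensity_apply W hAm]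
      have e2 : mW A ≤ ν S := by
        calc mW A ≤ ∑' j : Fin n, mW ((fun x : Fin n → X => x j) ⁻¹' S) := measure_iUnion_le _
          _ = ∑ j : Fin n, mW ((fun x : Fin n → X => x j) ⁻¹' S) := tsum_fintype _
          _ = ∑ j : Fin n, (mW.map fun x : Fin n → X => x j) S := by
              refine Finset.sum_congr rfl fun j _ => ?_
              rw [Measure.map_apply (measurable_pi_apply j) hSm]
          _ = ν S := by rw [hν, Measure.finset_sum_apply]
      have e3 : ν S < T / 2 / 4 := Hδ S hgS
      rw [e1]
      calc (4 : ℝ≥0∞) * mW A ≤ 4 * ν S := mul_le_mul_right e2 _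
        _ < 4 * (T / 2 / 4) := (ENNReal.mul_lt_mul_iff_right (by norm_num) (by norm_num)).2 e3
        _ = T / 2 := ENNReal.mul_div_cancel (by norm_num) (by norm_num)
    have hconst_bound : ENNReal.ofReal ((C * ε') ^ 2) * ∫⁻ x, W x ∂lam < T / 2 := by
      have e4 : ∫⁻ x, W x ∂lam = ENNReal.ofReal Br := by
        rw [hBr, ENNReal.ofReal_toReal hB.ne]
      have e6 : T = ENNReal.ofReal (ε ^ 2) := by
        rw [hT, ENNReal.ofReal_rpow_of_nonneg hε.le (by norm_num : (0:ℝ) ≤ 2)]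
        congr 1
        rw [← Real.rpow_natCast ε 2]
        norm_num
      have e5 : T / 2 = ENNReal.ofReal (ε ^ 2 / 2) := by
        rw [e6, ENNReal.ofReal_div_of_pos (by norm_num : (0:ℝ) < 2), ENNReal.ofReal_ofNat]
      rw [e4, e5, ← ENNReal.ofReal_mul (by positivity)]
      exact (ENNReal.ofReal_lt_ofReal_iff (by positivity)).2 hkey
    calc ∫⁻ x, (‖(Gfun k g x - Gfun k f x) * h x‖₊ : ℝ≥0∞) ^ (2:ℝ) ∂lam
        ≤ 4 * (∫⁻ x in A, W x ∂lam) + ENNReal.ofReal ((C * ε') ^ 2) * ∫⁻ x, W x ∂lam := step1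
      _ < T / 2 + T / 2 := ENNReal.add_lt_add hA_bound hconst_bound
      _ = T := ENNReal.add_halves T
  -- finish
  have hcoe : ⇑(U k g h) - ⇑(U k f h) =ᵐ[lam] fun x => (Gfun k g x - Gfun k f x) * h x := by
    filter_upwards [U0_coe k g h, U0_coe k f h] with x e1 e2
    show (U0 k g h : (Fin n → X) → ℂ) x - (U0 k f h : (Fin n → X) → ℂ) x = _
    rw [e1, e2, sub_mul]
  have heq1 : eLpNorm (⇑(U k g h) - ⇑(U k f h)) 2 lam
      = eLpNorm (fun x => (Gfun k g x - Gfun k f x) * h x) 2 lam := eLpNorm_congr_ae hcoe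
  have heq2 : eLpNorm (fun x => (Gfun k g x - Gfun k f x) * h x) 2 lam
      = (∫⁻ x, (‖(Gfun k g x - Gfun k f x) * h x‖₊ : ℝ≥0∞) ^ (2:ℝ) ∂lam) ^ (1 / (2:ℝ)) := by
    rw [eLpNorm_eq_lintegral_rpow_enorm_toReal two_ne_zero ENNReal.ofNat_ne_top]
    norm_num [enorm_eq_nnnorm]
  rw [Lp.dist_def, heq1, heq2]
  apply ENNReal.toReal_lt_of_lt_ofReal
  calc (∫⁻ x, (‖(Gfun k g x - Gfun k f x) * h x‖₊ : ℝ≥0∞) ^ (2:ℝ) ∂lam) ^ (1 / (2:ℝ))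
      < T ^ (1 / (2:ℝ)) := ENNReal.rpow_lt_rpow hint (by norm_num)
    _ = ENNReal.ofReal ε := by
        rw [hT, ← ENNReal.rpow_mul]
        norm_num

end St17

end

/-- The representation `σ(κ, λ)` is well defined: for a nondecreasing sequence
`κ = (k_1, …, k_n)` of nonzero integers and a finite Borel measure `λ` on `X^n` whose
marginals are absolutely continuous with respect to `μ` (condition (A1)), the assignment
sending `f ∈ L⁰(μ, 𝕋)` to the operator of multiplication by `∏_j (f ∘ π_j)^{k_j}` on
`L²(λ, ℂ)` is a well-defined strongly continuous unitary representation. -/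
theorem statement17
    {X : Type*} [MeasurableSpace X] [StandardBorelSpace X]
    (μ : Measure X) [IsProbabilityMeasure μ]
    (n : ℕ) (hn : 0 < n) (k : Fin n → ℤ) (hmono : Monotone k) (hk : ∀ i, k i ≠ 0)
    (lam : Measure (Fin n → X)) [IsFiniteMeasure lam]
    -- (A1): the marginals of `λ` are absolutely continuous with respect to `μ`
    (hA1 : ∀ j : Fin n, lam.map (fun x => x j) ≪ μ) :
    -- there is a unitary representation `ρ` of `L⁰(μ, 𝕋)` on `L²(λ, ℂ)` which is strongly
    -- continuous with respect to the topology of convergence in measure ...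
    ∃ ρ : (X →ₘ[μ] Circle) →* unitary (Lp ℂ 2 lam →L[ℂ] Lp ℂ 2 lam),
      (∀ h : Lp ℂ 2 lam,
        @Continuous _ _ (l0Topology μ) _
          fun f : X →ₘ[μ] Circle => ((ρ f : Lp ℂ 2 lam →L[ℂ] Lp ℂ 2 lam)) h) ∧
      -- ... and acts by the multiplication operators `U_f h = (∏_j (f ∘ π_j)^{k_j}) · h`
      ∀ (f : X →ₘ[μ] Circle) (h : Lp ℂ 2 lam),
        ⇑((ρ f : Lp ℂ 2 lam →L[ℂ] Lp ℂ 2 lam) h) =ᵐ[lam]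
          fun x => (∏ j, ((f (x j) : ℂ) ^ k j)) * h x := by
  classical
  refine ⟨St17.rho k hA1, fun h => St17.U_cont k hA1 h, fun f h => St17.U0_coe k f h⟩

end
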